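/- arXiv:1803.06567 — 3 statements merged into one kernel-verified Lean document; each statement's English description precedes it below -/
import Mathlib

section
/- Let f(x) = Σ_i c_i h_i(W_i x + b_i) where each h_i : ℝ → ℝ is differentiable with γ_i-Lipschitz derivative. Then the gradient ∇f(x) = W^T diag(c) h'(Wx + b) is Lipschitz continuous with constant L = σ_max(diag(c) W^T) · σ_max(diag(γ) W), where σ_max denotes the largest singular value. -/
open RealInnerProductSpace

/-- Largest singular value (operator 2-norm) of a matrix. -/
noncomputable def sigmaMax {m n : ℕ} (M : Matrix (Fin m) (Fin n) ℝ) : ℝ :=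
  ‖LinearMap.toContinuousLinearMap (Matrix.toEuclideanLin M)‖

lemma sigmaMax_bound {m n : ℕ} (M : Matrix (Fin m) (Fin n) ℝ)
    (v : EuclideanSpace ℝ (Fin n)) :
    ‖Matrix.toEuclideanLin M v‖ ≤ sigmaMax M * ‖v‖ := by
  have := (LinearMap.toContinuousLinearMap (Matrix.toEuclideanLin M)).le_opNorm v
  simpa [sigmaMax] using this

lemma norm_le_norm_of_abs_le {k : ℕ} (u v : EuclideanSpace ℝ (Fin k))
    (hle : ∀ i, |u i| ≤ |v i|) : ‖u‖ ≤ ‖v‖ := by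
  rw [EuclideanSpace.norm_eq, EuclideanSpace.norm_eq]
  apply Real.sqrt_le_sqrt
  apply Finset.sum_le_sum
  intro i _
  simp only [Real.norm_eq_abs]
  exact pow_le_pow_left₀ (abs_nonneg _) (hle i) 2

theorem gradient_formula_and_lipschitz (m n : ℕ)
    (W : Fin m → EuclideanSpace ℝ (Fin n)) (b c γ : Fin m → ℝ)
    (h : Fin m → ℝ → ℝ) (hdiff : ∀ i, Differentiable ℝ (h i))
    (hγ : ∀ i, 0 ≤ γ i)
    (hlip : ∀ i, ∀ s t : ℝ, |deriv (h i) s - deriv (h i) t| ≤ γ i * |s - t|)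
    (f : EuclideanSpace ℝ (Fin n) → ℝ)
    (hf : f = fun x => ∑ i, c i * h i (⟪W i, x⟫ + b i))
    (L : ℝ)
    (hLdef : L = sigmaMax (Matrix.transpose (Matrix.of fun i j => c i * W i j)) *
        sigmaMax (Matrix.of fun i j => γ i * W i j)) :
    (∀ x : EuclideanSpace ℝ (Fin n),
      gradient f x = ∑ i, (c i * deriv (h i) (⟪W i, x⟫ + b i)) • W i) ∧
    (∀ x y : EuclideanSpace ℝ (Fin n),
      ‖gradient f x - gradient f y‖ ≤ L * ‖x - y‖) := by
  have key : ∀ x : EuclideanSpace ℝ (Fin n),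
      HasGradientAt f (∑ i, (c i * deriv (h i) (⟪W i, x⟫ + b i)) • W i) x := by
    intro x
    rw [hasGradientAt_iff_hasFDerivAt]
    have hF : HasFDerivAt f
        (∑ i, (c i * deriv (h i) (⟪W i, x⟫ + b i)) • (innerSL ℝ (W i))) x := by
      rw [hf]
      apply HasFDerivAt.fun_sum
      intro i _
      have h1 : HasFDerivAt (fun x : EuclideanSpace ℝ (Fin n) => ⟪W i, x⟫ + b i)
          (innerSL ℝ (W i)) x := ((innerSL ℝ (W i)).hasFDerivAt).add_const _
      have h2 : HasDerivAt (h i) (deriv (h i) (⟪W i, x⟫ + b i)) (⟪W i, x⟫ + b i) :=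
        ((hdiff i) _).hasDerivAt
      have h3 := (h2.comp_hasFDerivAt x h1).const_mul (c i)
      refine h3.congr_fderiv ?_
      ext v
      simp [mul_smul, mul_comm]
    refine hF.congr_fderiv ?_
    ext v
    simp [InnerProductSpace.toDual_apply_apply, inner_sum, real_inner_smul_left]
  have grad_eq : ∀ x : EuclideanSpace ℝ (Fin n),
      gradient f x = ∑ i, (c i * deriv (h i) (⟪W i, x⟫ + b i)) • W i :=
    fun x => (key x).gradient
  refine ⟨grad_eq, fun x y => ?_⟩
  rw [grad_eq x, grad_eq y, hLdef]
  set M := Matrix.transpose (Matrix.of fun i j => c i * W i j) with hM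
  set N := Matrix.of (fun i j => γ i * W i j) with hN
  set Δ : EuclideanSpace ℝ (Fin m) :=
    WithLp.toLp 2 (fun i => deriv (h i) (⟪W i, x⟫ + b i) - deriv (h i) (⟪W i, y⟫ + b i)) with hΔ
  have hdiff_eq : (∑ i, (c i * deriv (h i) (⟪W i, x⟫ + b i)) • W i)
      - (∑ i, (c i * deriv (h i) (⟪W i, y⟫ + b i)) • W i)
      = Matrix.toEuclideanLin M Δ := by
    ext j
    rw [Matrix.toEuclideanLin_apply]
    simp only [PiLp.toLp_apply, Matrix.mulVec, dotProduct, hM,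
      Matrix.transpose_apply, Matrix.of_apply]
    have : ∀ z : EuclideanSpace ℝ (Fin n),
        (∑ i, (c i * deriv (h i) (⟪W i, z⟫ + b i)) • W i) j
        = ∑ i, (c i * deriv (h i) (⟪W i, z⟫ + b i)) * W i j := by
      intro z
      simp [WithLp.ofLp_sum]
    simp only [WithLp.ofLp_sub, Pi.sub_apply, this]
    rw [← Finset.sum_sub_distrib]
    congr 1
    funext i
    simp only [hΔ, PiLp.toLp_apply]
    ring
  have hΔ_le : ‖Δ‖ ≤ ‖Matrix.toEuclideanLin N (x - y)‖ := by
    apply norm_le_norm_of_abs_le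
    intro i
    have h1 : (Matrix.toEuclideanLin N (x - y)) i = γ i * ⟪W i, x - y⟫ := by
      rw [Matrix.toEuclideanLin_apply]
      simp only [PiLp.toLp_apply, Matrix.mulVec, dotProduct, hN,
        Matrix.of_apply]
      rw [PiLp.inner_apply]
      simp only [RCLike.inner_apply, conj_trivial, Finset.mul_sum]
      congr 1
      funext j
      have : (x - y) j = x j - y j := rfl
      rw [this]
      ring
    rw [h1]
    have h2 := hlip i (⟪W i, x⟫ + b i) (⟪W i, y⟫ + b i)
    have h3 : (⟪W i, x⟫ + b i) - (⟪W i, y⟫ + b i) = ⟪W i, x - y⟫ := by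
      rw [inner_sub_right]; ring
    rw [h3] at h2
    calc |Δ i| ≤ γ i * |⟪W i, x - y⟫| := h2
      _ = |γ i * ⟪W i, x - y⟫| := by rw [abs_mul, abs_of_nonneg (hγ i)]
  calc ‖(∑ i, (c i * deriv (h i) (⟪W i, x⟫ + b i)) • W i)
      - (∑ i, (c i * deriv (h i) (⟪W i, y⟫ + b i)) • W i)‖
      = ‖Matrix.toEuclideanLin M Δ‖ := by rw [hdiff_eq]
    _ ≤ sigmaMax M * ‖Δ‖ := sigmaMax_bound M Δ
    _ ≤ sigmaMax M * ‖Matrix.toEuclideanLin N (x - y)‖ :=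
        mul_le_mul_of_nonneg_left hΔ_le (norm_nonneg _)
    _ ≤ sigmaMax M * (sigmaMax N * ‖x - y‖) :=
        mul_le_mul_of_nonneg_left (sigmaMax_bound N _) (norm_nonneg _)
    _ = sigmaMax M * sigmaMax N * ‖x - y‖ := by ring
end

section
/- Let g : ℝ^n → ℝ be differentiable with L-Lipschitz gradient, x^nom ∈ ℝ^n, ν = ||∇g(x^nom)||_2 > 0, and 0 < ε < ν/(2L). Then the map T(x) = x^nom + ε ∇g(x)/||∇g(x)||_2 is well-defined and is a contraction on the closed ball B(x^nom, ε) with contraction factor εL/(ν − εL) < 1. -/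
open Metric

lemma norm_normalize_sub_le {E : Type*} [NormedAddCommGroup E] [InnerProductSpace ℝ E]
    (u v : E) (hu : u ≠ 0) (hv : v ≠ 0) :
    ‖(1 / ‖u‖) • u - (1 / ‖v‖) • v‖ ≤ 2 * ‖u - v‖ / (‖u‖ + ‖v‖) := by
  set a := ‖u‖ with ha
  set b := ‖v‖ with hb
  have hapos : 0 < a := norm_pos_iff.mpr hu
  have hbpos : 0 < b := norm_pos_iff.mpr hv
  set c : ℝ := inner ℝ u v with hc
  have hcs : |c| ≤ a * b := abs_real_inner_le_norm u v
  have hl2 : ‖(1 / a) • u - (1 / b) • v‖ ^ 2 = 2 - 2 * c / (a * b) := by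
    rw [@norm_sub_sq_real]
    rw [norm_smul, norm_smul, real_inner_smul_left, real_inner_smul_right]
    simp only [Real.norm_eq_abs, abs_of_pos (by positivity : (0:ℝ) < 1 / a),
      abs_of_pos (by positivity : (0:ℝ) < 1 / b)]
    rw [← ha, ← hb]
    field_simp
    try rw [hc]
    try ring
  have hr2 : (2 * ‖u - v‖ / (a + b)) ^ 2 = 4 * (a ^ 2 + b ^ 2 - 2 * c) / (a + b) ^ 2 := by
    have : ‖u - v‖ ^ 2 = a ^ 2 - 2 * c + b ^ 2 := by
      rw [@norm_sub_sq_real]; try ring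
    rw [div_pow, mul_pow, this]; ring
  have hsq : ‖(1 / a) • u - (1 / b) • v‖ ^ 2 ≤ (2 * ‖u - v‖ / (a + b)) ^ 2 := by
    rw [hl2, hr2]
    have e : 2 - 2 * c / (a * b) = (2 * (a * b) - 2 * c) / (a * b) := by field_simp
    rw [e, div_le_div_iff₀ (by positivity) (by positivity)]
    have h1 : -(a*b) ≤ c := neg_le_of_abs_le hcs
    nlinarith [sq_nonneg (a - b), mul_pos hapos hbpos, sq_nonneg (a + b)]
  calc ‖(1 / a) • u - (1 / b) • v‖
      = Real.sqrt (‖(1 / a) • u - (1 / b) • v‖ ^ 2) := by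
        rw [Real.sqrt_sq (norm_nonneg _)]
    _ ≤ Real.sqrt ((2 * ‖u - v‖ / (a + b)) ^ 2) := Real.sqrt_le_sqrt hsq
    _ = 2 * ‖u - v‖ / (a + b) := Real.sqrt_sq (by positivity)

theorem projected_gradient_map_contraction (n : ℕ)
    (g : EuclideanSpace ℝ (Fin n) → ℝ) (hg : Differentiable ℝ g)
    (L : ℝ) (hL : 0 < L)
    (hlip : ∀ x y : EuclideanSpace ℝ (Fin n),
      ‖gradient g x - gradient g y‖ ≤ L * ‖x - y‖)
    (xnom : EuclideanSpace ℝ (Fin n)) (ν : ℝ) (hν : ν = ‖gradient g xnom‖)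
    (hνpos : 0 < ν)
    (ε : ℝ) (hε : 0 < ε) (hεsmall : ε < ν / (2 * L))
    (T : EuclideanSpace ℝ (Fin n) → EuclideanSpace ℝ (Fin n))
    (hT : ∀ x, T x = xnom + (ε / ‖gradient g x‖) • gradient g x) :
    (∀ x ∈ Metric.closedBall xnom ε, gradient g x ≠ 0) ∧
    Set.MapsTo T (Metric.closedBall xnom ε) (Metric.closedBall xnom ε) ∧
    ε * L / (ν - ε * L) < 1 ∧
    (∀ x ∈ Metric.closedBall xnom ε, ∀ y ∈ Metric.closedBall xnom ε,
      ‖T x - T y‖ ≤ (ε * L / (ν - ε * L)) * ‖x - y‖) := by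
  have hεL : ε * L < ν / 2 := by
    have h2 : ε * (2 * L) < ν := (lt_div_iff₀ (by positivity)).mp hεsmall
    linarith
  have hdenom : 0 < ν - ε * L := by nlinarith
  -- lower bound on gradient norm in the ball
  have hlow : ∀ x ∈ Metric.closedBall xnom ε, ν - ε * L ≤ ‖gradient g x‖ := by
    intro x hx
    have hd : ‖x - xnom‖ ≤ ε := by
      rw [Metric.mem_closedBall, dist_eq_norm] at hx; exact hx
    have h1 : ‖gradient g x - gradient g xnom‖ ≤ L * ε := by
      calc ‖gradient g x - gradient g xnom‖ ≤ L * ‖x - xnom‖ := hlip x xnom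
        _ ≤ L * ε := by nlinarith
    have h2 : ‖gradient g xnom‖ - ‖gradient g x‖ ≤ L * ε := by
      calc ‖gradient g xnom‖ - ‖gradient g x‖ ≤ ‖gradient g xnom - gradient g x‖ :=
            norm_sub_norm_le _ _
        _ = ‖gradient g x - gradient g xnom‖ := by rw [norm_sub_rev]
        _ ≤ L * ε := h1
    rw [← hν] at h2
    linarith [h2]
  have hne : ∀ x ∈ Metric.closedBall xnom ε, gradient g x ≠ 0 := by
    intro x hx h0
    have := hlow x hx
    rw [h0, norm_zero] at this
    linarith
  refine ⟨hne, ?_, ?_, ?_⟩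
  · intro x hx
    have hgx := hne x hx
    have hpos : 0 < ‖gradient g x‖ := norm_pos_iff.mpr hgx
    rw [Metric.mem_closedBall, dist_eq_norm, hT x]
    have : xnom + (ε / ‖gradient g x‖) • gradient g x - xnom
        = (ε / ‖gradient g x‖) • gradient g x := by abel
    rw [this, norm_smul, Real.norm_eq_abs, abs_of_pos (by positivity)]
    rw [div_mul_cancel₀]
    exact hpos.ne'
  · rw [div_lt_one hdenom]; nlinarith
  · intro x hx y hy
    have hgx := hne x hx
    have hgy := hne y hy
    set u := gradient g x with hu
    set v := gradient g y with hv
    have hupos : 0 < ‖u‖ := norm_pos_iff.mpr hgx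
    have hvpos : 0 < ‖v‖ := norm_pos_iff.mpr hgy
    have hTxy : T x - T y = ε • ((1 / ‖u‖) • u - (1 / ‖v‖) • v) := by
      rw [hT x, hT y]
      rw [smul_sub, smul_smul, smul_smul]
      have e1 : ε * (1 / ‖u‖) = ε / ‖u‖ := by ring
      have e2 : ε * (1 / ‖v‖) = ε / ‖v‖ := by ring
      rw [e1, e2]
      abel
    rw [hTxy, norm_smul, Real.norm_eq_abs, abs_of_pos hε]
    have key := norm_normalize_sub_le u v hgx hgy
    have hsum : 2 * (ν - ε * L) ≤ ‖u‖ + ‖v‖ := by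
      have := hlow x hx; have := hlow y hy; linarith
    have huvL : ‖u - v‖ ≤ L * ‖x - y‖ := hlip x y
    have h2 : 2 * ‖u - v‖ / (‖u‖ + ‖v‖) ≤ ‖u - v‖ / (ν - ε * L) := by
      rw [div_le_div_iff₀ (by linarith) hdenom]
      have hn : 0 ≤ ‖u - v‖ := norm_nonneg _
      nlinarith
    have h3 : ‖u - v‖ / (ν - ε * L) ≤ L * ‖x - y‖ / (ν - ε * L) := by
      gcongr
    calc ε * ‖(1 / ‖u‖) • u - (1 / ‖v‖) • v‖
        ≤ ε * (2 * ‖u - v‖ / (‖u‖ + ‖v‖)) := by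
          exact mul_le_mul_of_nonneg_left key hε.le
      _ ≤ ε * (L * ‖x - y‖ / (ν - ε * L)) := by
          apply mul_le_mul_of_nonneg_left (h2.trans h3) hε.le
      _ = ε * L / (ν - ε * L) * ‖x - y‖ := by ring
end

section
/- Let g : ℝ^n → ℝ be differentiable with L-Lipschitz gradient, ν = ||∇g(x^nom)||_2, and 0 < ε < ν/(2L). Then g has a unique maximizer x* over the ball {x : ||x − x^nom||_2 ≤ ε}, this maximizer satisfies the fixed point equation x* = x^nom + ε ∇g(x*)/||∇g(x*)||_2, and the iteration x^{k+1} = T(x^k) starting from x^0 = x^nom satisfies ||x^k − x*||_2 ≤ ε (εL/(ν − εL))^k. -/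
open scoped RealInnerProductSpace

lemma my_norm_normalize_sub (E : Type*) [NormedAddCommGroup E] [InnerProductSpace ℝ E]
    (a b : E) (ha : a ≠ 0) (hb : b ≠ 0) :
    ‖(1/‖a‖) • a - (1/‖b‖) • b‖ * (‖a‖ + ‖b‖) ≤ 2 * ‖a - b‖ := by
  set A := ‖a‖ with hA
  set B := ‖b‖ with hB
  have hA0 : 0 < A := norm_pos_iff.mpr ha
  have hB0 : 0 < B := norm_pos_iff.mpr hb
  have hs : ⟪a, b⟫ ≤ A * B := real_inner_le_norm a b
  have hs2 : -(A * B) ≤ ⟪a, b⟫ := neg_le_of_abs_le (abs_real_inner_le_norm a b)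
  have h1 : ‖(1/A) • a - (1/B) • b‖^2 * (A*B) = 2*A*B - 2*⟪a, b⟫ := by
    rw [@norm_sub_sq_real]
    rw [real_inner_smul_left, real_inner_smul_right]
    rw [norm_smul, norm_smul]
    simp only [one_div, Real.norm_eq_abs, abs_of_pos (inv_pos.mpr hA0), abs_of_pos (inv_pos.mpr hB0)]
    field_simp
    ring
  have h2 : ‖a - b‖^2 = A^2 - 2*⟪a, b⟫ + B^2 := by
    rw [@norm_sub_sq_real]
  have hX := norm_nonneg ((1/A) • a - (1/B) • b)
  have hY := norm_nonneg (a - b)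
  set X := ‖(1/A) • a - (1/B) • b‖
  set Y := ‖a - b‖
  have h1' : (X*(A+B))^2 * (A*B) = (2*A*B - 2*⟪a, b⟫)*(A+B)^2 := by
    rw [mul_pow]; linear_combination (A+B)^2 * h1
  have h3 : (2*Y)^2*(A*B) = 4*(A*B)*(A^2 - 2*⟪a, b⟫ + B^2) := by
    rw [mul_pow]; linear_combination 4*(A*B)*h2
  have key : (X*(A+B))^2*(A*B) ≤ (2*Y)^2*(A*B) := by
    rw [h1', h3]
    nlinarith [mul_nonneg (sq_nonneg (A-B)) (by linarith : (0:ℝ) ≤ A*B + ⟪a, b⟫)]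
  have key2 : (X*(A+B))^2 ≤ (2*Y)^2 :=
    le_of_mul_le_mul_right key (mul_pos hA0 hB0)
  nlinarith [key2, mul_nonneg hX (by positivity : (0:ℝ) ≤ A+B), hY]



lemma my_descent (E : Type*) [NormedAddCommGroup E] [InnerProductSpace ℝ E] [CompleteSpace E]
    (g : E → ℝ) (hg : Differentiable ℝ g) (L : ℝ) (hL : 0 ≤ L)
    (hlip : ∀ x y : E, ‖gradient g x - gradient g y‖ ≤ L * ‖x - y‖)
    (x y : E) :
    g y ≤ g x + ⟪gradient g x, y - x⟫ + L/2 * ‖y - x‖^2 := by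
  set v := y - x with hv
  have hgradcont : Continuous (gradient g) := by
    have : LipschitzWith (Real.toNNReal L) (gradient g) := by
      apply LipschitzWith.of_dist_le_mul
      intro a b
      rw [dist_eq_norm, dist_eq_norm, Real.coe_toNNReal L hL]
      exact hlip a b
    exact this.continuous
  have hline : ∀ t : ℝ, HasDerivAt (fun t : ℝ => g (x + t • v))
      ⟪gradient g (x + t • v), v⟫ t := by
    intro t
    have h1 : HasDerivAt (fun t : ℝ => x + t • v) v t := by
      simpa using ((hasDerivAt_id t).smul_const v).const_add x
    have h2 : HasFDerivAt g (InnerProductSpace.toDual ℝ E (gradient g (x + t • v))) (x + t • v) :=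
      ((hg (x + t • v)).hasGradientAt).hasFDerivAt
    have h3 := h2.comp_hasDerivAt t h1
    simpa [InnerProductSpace.toDual_apply_apply, Function.comp_def] using h3
  have hcont : Continuous fun t : ℝ => ⟪gradient g (x + t • v), v⟫ := by
    exact Continuous.inner (hgradcont.comp (by continuity)) continuous_const
  have hFTC : ∫ t in (0:ℝ)..1, ⟪gradient g (x + t • v), v⟫ = g (x + (1:ℝ) • v) - g (x + (0:ℝ) • v) := by
    exact intervalIntegral.integral_eq_sub_of_hasDerivAt (fun t _ => hline t)
      (hcont.intervalIntegrable 0 1)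
  have hptwise : ∀ t ∈ Set.Icc (0:ℝ) 1,
      ⟪gradient g (x + t • v), v⟫ ≤ ⟪gradient g x, v⟫ + (L * ‖v‖^2) * t := by
    intro t ht
    have h1 : ⟪gradient g (x + t • v) - gradient g x, v⟫
        ≤ ‖gradient g (x + t • v) - gradient g x‖ * ‖v‖ := real_inner_le_norm _ _
    have h2 : ‖gradient g (x + t • v) - gradient g x‖ ≤ L * (t * ‖v‖) := by
      have := hlip (x + t • v) x
      simpa [norm_smul, abs_of_nonneg ht.1] using this
    have h3 : ⟪gradient g (x + t • v), v⟫ = ⟪gradient g x, v⟫ + ⟪gradient g (x + t • v) - gradient g x, v⟫ := by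
      rw [inner_sub_left]; ring
    have h4 : ‖gradient g (x + t • v) - gradient g x‖ * ‖v‖ ≤ (L * (t * ‖v‖)) * ‖v‖ :=
      mul_le_mul_of_nonneg_right h2 (norm_nonneg v)
    rw [h3]
    nlinarith [norm_nonneg v]
  have hintbound : ∫ t in (0:ℝ)..1, ⟪gradient g (x + t • v), v⟫
      ≤ ∫ t in (0:ℝ)..1, (⟪gradient g x, v⟫ + (L * ‖v‖^2) * t) := by
    apply intervalIntegral.integral_mono_on (by norm_num) (hcont.intervalIntegrable 0 1)
      ((by continuity : Continuous fun t : ℝ => ⟪gradient g x, v⟫ + (L * ‖v‖^2) * t).intervalIntegrable 0 1)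
    exact hptwise
  have hrhs : ∫ t in (0:ℝ)..1, (⟪gradient g x, v⟫ + (L * ‖v‖^2) * t)
      = ⟪gradient g x, v⟫ + L/2 * ‖v‖^2 := by
    rw [intervalIntegral.integral_add (intervalIntegrable_const)
      ((by apply Continuous.intervalIntegrable; continuity :
        IntervalIntegrable (fun t : ℝ => (L * ‖v‖^2) * t) MeasureTheory.volume 0 1))]
    rw [intervalIntegral.integral_const_mul, integral_id]
    simp
    ring
  have : g (x + (1:ℝ) • v) - g (x + (0:ℝ) • v) ≤ ⟪gradient g x, v⟫ + L/2 * ‖v‖^2 := by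
    rw [← hFTC, ← hrhs]; exact hintbound
  simp only [one_smul, zero_smul, add_zero] at this
  have hxy : x + v = y := by rw [hv]; abel
  rw [hxy] at this
  linarith

set_option maxHeartbeats 1000000 in
theorem verification_iteration_converges (n : ℕ)
    (g : EuclideanSpace ℝ (Fin n) → ℝ) (hg : Differentiable ℝ g)
    (L : ℝ) (hL : 0 < L)
    (hlip : ∀ x y : EuclideanSpace ℝ (Fin n),
      ‖gradient g x - gradient g y‖ ≤ L * ‖x - y‖)
    (xnom : EuclideanSpace ℝ (Fin n)) (ν : ℝ) (hν : ν = ‖gradient g xnom‖)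
    (ε : ℝ) (hε : 0 < ε) (hεsmall : ε < ν / (2 * L))
    (T : EuclideanSpace ℝ (Fin n) → EuclideanSpace ℝ (Fin n))
    (hT : ∀ x, T x = xnom + (ε / ‖gradient g x‖) • gradient g x)
    (x : ℕ → EuclideanSpace ℝ (Fin n)) (hx0 : x 0 = xnom)
    (hxk : ∀ k, x (k + 1) = T (x k)) :
    ∃ xstar ∈ Metric.closedBall xnom ε,
      IsMaxOn g (Metric.closedBall xnom ε) xstar ∧
      (∀ y ∈ Metric.closedBall xnom ε, IsMaxOn g (Metric.closedBall xnom ε) y → y = xstar) ∧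
      xstar = xnom + (ε / ‖gradient g xstar‖) • gradient g xstar ∧
      (∀ k : ℕ, ‖x k - xstar‖ ≤ ε * (ε * L / (ν - ε * L)) ^ k) := by
  classical
  have h2L : 0 < 2 * L := by linarith
  have hkey : 2 * (ε * L) < ν := by
    have := (lt_div_iff₀ h2L).mp hεsmall; nlinarith
  have hεL : 0 < ε * L := mul_pos hε hL
  have hm0 : 0 < ν - ε * L := by linarith
  have hν0 : 0 < ν := by nlinarith
  set s := Metric.closedBall xnom ε with hs
  have hxsnom : xnom ∈ s := Metric.mem_closedBall_self hε.le
  have hglb : ∀ z ∈ s, ν - ε * L ≤ ‖gradient g z‖ := by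
    intro z hz
    have h1 : ‖gradient g xnom‖ - ‖gradient g z‖ ≤ ‖gradient g xnom - gradient g z‖ :=
      norm_sub_norm_le _ _
    have h2 : ‖gradient g xnom - gradient g z‖ ≤ L * ‖xnom - z‖ := hlip xnom z
    have h3 : ‖xnom - z‖ ≤ ε := by
      rw [hs, Metric.mem_closedBall, dist_eq_norm] at hz
      rw [norm_sub_rev]; exact hz
    have h4 : L * ‖xnom - z‖ ≤ L * ε := mul_le_mul_of_nonneg_left h3 hL.le
    rw [hν] at *
    linarith
  have hgne : ∀ z ∈ s, gradient g z ≠ 0 := by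
    intro z hz h0
    have := hglb z hz; rw [h0, norm_zero] at this; linarith
  have hTdist : ∀ z ∈ s, ‖T z - xnom‖ = ε := by
    intro z hz
    rw [hT]
    have heq : xnom + (ε / ‖gradient g z‖) • gradient g z - xnom
        = (ε / ‖gradient g z‖) • gradient g z := by abel
    have hz0 : 0 < ‖gradient g z‖ := lt_of_lt_of_le hm0 (hglb z hz)
    rw [heq, norm_smul, Real.norm_eq_abs, abs_of_pos (div_pos hε hz0)]
    field_simp
  have hTmaps : Set.MapsTo T s s := by
    intro z hz
    rw [hs, Metric.mem_closedBall, dist_eq_norm, hTdist z hz]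
  set q := ε * L / (ν - ε * L) with hq
  have hq0 : 0 ≤ q := le_of_lt (div_pos hεL hm0)
  have hq1 : q < 1 := (div_lt_one hm0).mpr (by linarith)
  have hcontr : ∀ z ∈ s, ∀ w ∈ s, ‖T z - T w‖ ≤ q * ‖z - w‖ := by
    intro z hz w hw
    set a := gradient g z with hadef
    set b := gradient g w with hbdef
    have ha : a ≠ 0 := hgne z hz
    have hb : b ≠ 0 := hgne w hw
    have hTzw : T z - T w = ε • ((1/‖a‖) • a - (1/‖b‖) • b) := by
      rw [hT, hT, smul_sub, smul_smul, smul_smul, mul_one_div, mul_one_div, ← hadef, ← hbdef]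
      abel
    have hnorm : ‖T z - T w‖ = ε * ‖(1/‖a‖) • a - (1/‖b‖) • b‖ := by
      rw [hTzw, norm_smul, Real.norm_eq_abs, abs_of_pos hε]
    have hmain := my_norm_normalize_sub _ a b ha hb
    have hab : ‖a - b‖ ≤ L * ‖z - w‖ := hlip z w
    have hAB : 2 * (ν - ε * L) ≤ ‖a‖ + ‖b‖ := by
      have h1 := hglb z hz; have h2 := hglb w hw; linarith
    have h5 : ‖(1/‖a‖) • a - (1/‖b‖) • b‖ * (2 * (ν - ε * L)) ≤ 2 * (L * ‖z - w‖) := by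
      calc ‖(1/‖a‖) • a - (1/‖b‖) • b‖ * (2 * (ν - ε * L))
          ≤ ‖(1/‖a‖) • a - (1/‖b‖) • b‖ * (‖a‖ + ‖b‖) :=
            mul_le_mul_of_nonneg_left hAB (norm_nonneg _)
        _ ≤ 2 * ‖a - b‖ := hmain
        _ ≤ 2 * (L * ‖z - w‖) := by linarith
    rw [hnorm, hq, div_mul_eq_mul_div, le_div_iff₀ hm0]
    nlinarith [h5, hε]
  have hsc : IsComplete s := Metric.isClosed_closedBall.isComplete
  have hcontract : ContractingWith ⟨q, hq0⟩ (hTmaps.restrict T s s) := by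
    constructor
    · exact_mod_cast hq1
    · apply LipschitzWith.of_dist_le_mul
      rintro ⟨z, hz⟩ ⟨w, hw⟩
      have e1 : dist (hTmaps.restrict T s s ⟨z, hz⟩) (hTmaps.restrict T s s ⟨w, hw⟩)
          = ‖T z - T w‖ := by
        rw [Subtype.dist_eq, Set.MapsTo.val_restrict_apply, Set.MapsTo.val_restrict_apply,
          dist_eq_norm]
      have e2 : dist (⟨z, hz⟩ : s) ⟨w, hw⟩ = ‖z - w‖ := by
        rw [Subtype.dist_eq, dist_eq_norm]
      rw [e1, e2]
      exact hcontr z hz w hw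
  obtain ⟨xstar, hxs_mem, hfix, -, -⟩ :=
    ContractingWith.exists_fixedPoint' hsc hTmaps hcontract hxsnom (edist_ne_top _ _)
  have hfixeq : xstar = xnom + (ε / ‖gradient g xstar‖) • gradient g xstar := by
    conv_lhs => rw [← hfix]
    rw [hT]
  have hdstar : ‖xstar - xnom‖ = ε := by
    have h := hTdist xstar hxs_mem
    rw [hfix] at h
    exact h
  have hxmem : ∀ k, x k ∈ s := by
    intro k; induction k with
    | zero => rw [hx0]; exact hxsnom
    | succ k ih => rw [hxk k]; exact hTmaps ih
  have hbound : ∀ k, ‖x k - xstar‖ ≤ ε * q ^ k := by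
    intro k; induction k with
    | zero =>
      rw [hx0, pow_zero, mul_one, norm_sub_rev, hdstar]
    | succ k ih =>
      rw [hxk k]
      calc ‖T (x k) - xstar‖ = ‖T (x k) - T xstar‖ := by rw [hfix]
        _ ≤ q * ‖x k - xstar‖ := hcontr _ (hxmem k) _ hxs_mem
        _ ≤ q * (ε * q ^ k) := mul_le_mul_of_nonneg_left ih hq0
        _ = ε * q ^ (k + 1) := by ring
  -- strict maximality
  have hstrict : ∀ y ∈ s, y ≠ xstar → g y < g xstar := by
    intro y hy hne
    have hdesc := my_descent _ g hg L hL.le hlip xstar y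
    set A := ‖gradient g xstar‖ with hAdef
    have hA : ε * L < A := lt_of_lt_of_le (by linarith) (hglb xstar hxs_mem)
    have hA0 : 0 < A := lt_trans hεL hA
    have hgrad_eq : gradient g xstar = (A / ε) • (xstar - xnom) := by
      have h1 : xstar - xnom = (ε / A) • gradient g xstar := by
        conv_lhs => rw [hfixeq]
        abel
      rw [h1, smul_smul]
      rw [show A / ε * (ε / A) = 1 by field_simp]
      rw [one_smul]
    set c := ⟪xstar - xnom, y - xnom⟫ with hc
    set r := ‖y - xnom‖ with hr
    have hr_le : r ≤ ε := by
      rw [hr]; rw [hs, Metric.mem_closedBall, dist_eq_norm] at hy; exact hy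
    have hr0 : 0 ≤ r := norm_nonneg _
    have hcs : c ≤ ε * r := by
      calc c ≤ ‖xstar - xnom‖ * ‖y - xnom‖ := real_inner_le_norm _ _
        _ = ε * r := by rw [hdstar]
    have hysplit : y - xstar = (y - xnom) - (xstar - xnom) := by abel
    have hinner : ⟪gradient g xstar, y - xstar⟫ = (A / ε) * (c - ε ^ 2) := by
      rw [hgrad_eq, real_inner_smul_left, hysplit, inner_sub_right,
        real_inner_self_eq_norm_sq, hdstar, ← hc]
    have hnorm2 : ‖y - xstar‖ ^ 2 = r ^ 2 - 2 * c + ε ^ 2 := by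
      rw [hysplit, @norm_sub_sq_real, hdstar, real_inner_comm, ← hc, ← hr]
    have hD : 0 < ‖y - xstar‖ := norm_pos_iff.mpr (sub_ne_zero.mpr hne)
    have hD2 : 0 < r ^ 2 - 2 * c + ε ^ 2 := by
      rw [← hnorm2]; positivity
    have hEneg' : A * (c - ε ^ 2) + (L * ε / 2) * (r ^ 2 - 2 * c + ε ^ 2) < 0 := by
      rcases lt_or_eq_of_le hr_le with h | h
      · have k1 : 0 ≤ (A - L * ε) * (ε * r - c) :=
          mul_nonneg (by nlinarith) (by linarith)
        have k2 : 0 < (A - L * ε) * ε * (ε - r) :=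
          mul_pos (mul_pos (by nlinarith) hε) (by linarith)
        have k3 : 0 ≤ L * ε * (ε - r) * (ε + r) :=
          mul_nonneg (mul_nonneg (by positivity) (by linarith)) (by linarith)
        nlinarith [k1, k2, k3]
      · have hc2 : c < ε ^ 2 := by rw [h] at hD2; linarith
        rw [h]
        have k4 : 0 < (A - L * ε) * (ε ^ 2 - c) :=
          mul_pos (by nlinarith) (by linarith)
        nlinarith [k4]
    have hEneg : (A / ε) * (c - ε ^ 2) + L / 2 * (r ^ 2 - 2 * c + ε ^ 2) < 0 := by
      have heq : (A / ε) * (c - ε ^ 2) + L / 2 * (r ^ 2 - 2 * c + ε ^ 2)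
          = (A * (c - ε ^ 2) + (L * ε / 2) * (r ^ 2 - 2 * c + ε ^ 2)) / ε := by
        field_simp
      rw [heq]
      exact div_neg_of_neg_of_pos hEneg' hε
    rw [hinner, hnorm2] at hdesc
    linarith
  have hmax : IsMaxOn g s xstar := by
    rw [isMaxOn_iff]
    intro y hy
    rcases eq_or_ne y xstar with rfl | hne
    · exact le_rfl
    · exact (hstrict y hy hne).le
  refine ⟨xstar, hxs_mem, hmax, ?_, hfixeq, hbound⟩
  intro y hy hymax
  by_contra hne
  have h1 : g xstar ≤ g y := (isMaxOn_iff.mp hymax) xstar hxs_mem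
  have h2 := hstrict y hy hne
  linarith
end
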